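/- In the lamplighter group L₂ = ℤ₂ ≀ ℤ with the automata generating set {t, ta}, for n ≥ 1 the element g_n = (t^n a t^{-n})(t^{-n} a t^{n}) has word length exactly 4n + 2. -/

import Mathlib

open scoped commutatorElement

/-- Relators for the lamplighter group `L_m = ℤ_m ≀ ℤ` in the wreath product
presentation `⟨a, t | a^m, [t^i a t^{-i}, t^j a t^{-j}]⟩`, where `a` is encoded
by `true` and `t` by `false`. -/
def lampRels (m : ℕ) : Set (FreeGroup Bool) :=
  {FreeGroup.of true ^ m} ∪
  {r | ∃ i j : ℤ,
    r = ⁅FreeGroup.of false ^ i * FreeGroup.of true * FreeGroup.of false ^ (-i),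
        FreeGroup.of false ^ j * FreeGroup.of true * FreeGroup.of false ^ (-j)⁆}

/-- The lamplighter group `L_m = ℤ_m ≀ ℤ`. -/
abbrev Lamp (m : ℕ) := PresentedGroup (lampRels m)

/-- The generator `a` of `L_m`. -/
noncomputable def la (m : ℕ) : Lamp m := PresentedGroup.of true

/-- The generator `t` of `L_m`. -/
noncomputable def lt (m : ℕ) : Lamp m := PresentedGroup.of false

/-- Word length of `g` with respect to the generating set `S` (and inverses):
the least length of a list of elements of `S ∪ S⁻¹` with product `g`. -/
noncomputable def wordLength {G : Type*} [Group G] (S : Set G) (g : G) : ℕ :=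
  sInf {n | ∃ l : List G, (∀ x ∈ l, x ∈ S ∨ x⁻¹ ∈ S) ∧ l.length = n ∧ l.prod = g}

/-! ### Auxiliary model: action of `L₂` on lamp configurations -/

namespace LampAux

/-- State space: a finitely-supported lamp configuration and a lamplighter position. -/
abbrev St := (ℤ →₀ ZMod 2) × ℤ

lemma toggle_toggle (f : ℤ →₀ ZMod 2) (k : ℤ) :
    f + Finsupp.single k 1 + Finsupp.single k 1 = f := by
  rw [add_assoc, ← Finsupp.single_add]
  have : (1 + 1 : ZMod 2) = 0 := by decide
  rw [this, Finsupp.single_zero, add_zero]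

/-- The permutation of states induced by `a` (toggle the lamp at the current position). -/
noncomputable def A : Equiv.Perm St where
  toFun s := (s.1 + Finsupp.single s.2 1, s.2)
  invFun s := (s.1 + Finsupp.single s.2 1, s.2)
  left_inv s := Prod.ext (toggle_toggle s.1 s.2) rfl
  right_inv s := Prod.ext (toggle_toggle s.1 s.2) rfl

/-- The permutation of states induced by `t` (move right). -/
def T : Equiv.Perm St where
  toFun s := (s.1, s.2 + 1)
  invFun s := (s.1, s.2 - 1)
  left_inv s := Prod.ext rfl (by ring)
  right_inv s := Prod.ext rfl (by ring)

lemma A_apply (s : St) : A s = (s.1 + Finsupp.single s.2 1, s.2) := rfl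
lemma T_apply (s : St) : T s = (s.1, s.2 + 1) := rfl
lemma Tinv_apply (s : St) : T⁻¹ s = (s.1, s.2 - 1) := rfl
lemma Ainv : A⁻¹ = A := Equiv.ext fun _ => rfl

lemma Tpow : ∀ (i : ℤ) (s : St), (T ^ i) s = (s.1, s.2 + i) := by
  intro i
  induction i using Int.induction_on with
  | zero => intro s; simp
  | succ n ih =>
      intro s
      rw [zpow_add_one, Equiv.Perm.mul_apply, T_apply, ih]
      simp; ring
  | pred n ih =>
      intro s
      rw [zpow_sub_one, Equiv.Perm.mul_apply, Tinv_apply, ih]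
      simp; ring

noncomputable def F : Bool → Equiv.Perm St := fun b => bif b then A else T

lemma conj_apply (i : ℤ) (s : St) :
    (FreeGroup.lift F (FreeGroup.of false ^ i * FreeGroup.of true * FreeGroup.of false ^ (-i))) s
      = (s.1 + Finsupp.single (s.2 - i) 1, s.2) := by
  rw [map_mul, map_mul, map_zpow, map_zpow, FreeGroup.lift_apply_of, FreeGroup.lift_apply_of]
  show (T ^ i) (A ((T ^ (-i)) s)) = _
  rw [Tpow, A_apply, Tpow]
  exact Prod.ext (by norm_num [sub_eq_add_neg]) (by ring)

lemma rels_check : ∀ r ∈ lampRels 2, (FreeGroup.lift F) r = 1 := by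
  intro r hr
  rcases hr with h | ⟨i, j, rfl⟩
  · rw [Set.mem_singleton_iff] at h
    subst h
    rw [map_pow, FreeGroup.lift_apply_of]
    show A * A = 1
    refine Equiv.ext fun s => ?_
    show (s.1 + Finsupp.single s.2 1 + Finsupp.single s.2 1, s.2) = s
    exact Prod.ext (toggle_toggle s.1 s.2) rfl
  · rw [map_commutatorElement, commutatorElement_eq_one_iff_mul_comm]
    refine Equiv.ext fun s => ?_
    rw [Equiv.Perm.mul_apply, Equiv.Perm.mul_apply, conj_apply, conj_apply,
      conj_apply, conj_apply]
    show (s.1 + Finsupp.single (s.2 - j) 1 + Finsupp.single (s.2 - i) 1, s.2)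
      = (s.1 + Finsupp.single (s.2 - i) 1 + Finsupp.single (s.2 - j) 1, s.2)
    exact Prod.ext (add_right_comm _ _ _) rfl

/-- The action of `L₂` on states. -/
noncomputable def pi : Lamp 2 →* Equiv.Perm St := PresentedGroup.toGroup rels_check

lemma pi_la : pi (la 2) = A := PresentedGroup.toGroup.of rels_check
lemma pi_lt : pi (lt 2) = T := PresentedGroup.toGroup.of rels_check

/-! ### The potential function -/

noncomputable def SS (f : ℤ →₀ ZMod 2) : ℕ := f.support.sup fun i => (i + 1).toNat
noncomputable def TT (f : ℤ →₀ ZMod 2) : ℕ := f.support.sup fun i => (-i).toNat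

/-- The word-length potential of a state. -/
noncomputable def phi (s : St) : ℕ :=
  2 * (max s.2.toNat (SS s.1) + max (-s.2).toNat (TT s.1)) - s.2.natAbs

lemma SS_toggle (f : ℤ →₀ ZMod 2) (k : ℤ) :
    SS (f + Finsupp.single k 1) ≤ max (SS f) (k + 1).toNat := by
  apply Finset.sup_le
  intro i hi
  rcases Finset.mem_union.1 (Finsupp.support_add hi) with h | h
  · exact le_max_of_le_left (Finset.le_sup (f := fun i => (i + 1).toNat) h)
  · have hk : i = k := Finset.mem_singleton.1 (Finsupp.support_single_subset h)
    subst hk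
    exact le_max_right _ _

lemma TT_toggle (f : ℤ →₀ ZMod 2) (k : ℤ) :
    TT (f + Finsupp.single k 1) ≤ max (TT f) (-k).toNat := by
  apply Finset.sup_le
  intro i hi
  rcases Finset.mem_union.1 (Finsupp.support_add hi) with h | h
  · exact le_max_of_le_left (Finset.le_sup (f := fun i => (-i).toNat) h)
  · have hk : i = k := Finset.mem_singleton.1 (Finsupp.support_single_subset h)
    subst hk
    exact le_max_right _ _

lemma phi_T (s : St) : phi (s.1, s.2 + 1) ≤ phi s + 1 := by
  unfold phi
  dsimp only
  omega

lemma phi_Tinv (s : St) : phi (s.1, s.2 - 1) ≤ phi s + 1 := by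
  unfold phi
  dsimp only
  omega

lemma phi_TA (s : St) : phi (s.1 + Finsupp.single s.2 1, s.2 + 1) ≤ phi s + 1 := by
  have h1 := SS_toggle s.1 s.2
  have h2 := TT_toggle s.1 s.2
  unfold phi
  dsimp only
  omega

lemma phi_TAinv (s : St) : phi (s.1 + Finsupp.single (s.2 - 1) 1, s.2 - 1) ≤ phi s + 1 := by
  have h1 := SS_toggle s.1 (s.2 - 1)
  have h2 := TT_toggle s.1 (s.2 - 1)
  unfold phi
  dsimp only
  omega

/-- Each generator changes the potential by at most 1. -/
lemma pi_step (x : Lamp 2)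
    (hx : x ∈ ({lt 2, lt 2 * la 2} : Set (Lamp 2)) ∨
          x⁻¹ ∈ ({lt 2, lt 2 * la 2} : Set (Lamp 2))) (s : St) :
    phi (pi x s) ≤ phi s + 1 := by
  simp only [Set.mem_insert_iff, Set.mem_singleton_iff] at hx
  rcases hx with (rfl | rfl) | hx | hx
  · rw [pi_lt]
    exact phi_T s
  · rw [map_mul, pi_lt, pi_la, Equiv.Perm.mul_apply]
    exact phi_TA s
  · have hxe : x = (lt 2)⁻¹ := by rw [← hx, inv_inv]
    subst hxe
    rw [map_inv, pi_lt]
    exact phi_Tinv s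
  · have hxe : x = (lt 2 * la 2)⁻¹ := by rw [← hx, inv_inv]
    subst hxe
    rw [map_inv, map_mul, pi_lt, pi_la, mul_inv_rev, Ainv, Equiv.Perm.mul_apply]
    exact phi_TAinv s

/-- Lower bound: the potential of the endpoint is at most the word length. -/
lemma phi_prod (l : List (Lamp 2))
    (h : ∀ x ∈ l, x ∈ ({lt 2, lt 2 * la 2} : Set (Lamp 2)) ∨
          x⁻¹ ∈ ({lt 2, lt 2 * la 2} : Set (Lamp 2))) :
    phi (pi l.prod (0, 0)) ≤ l.length := by
  induction l with
  | nil =>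
      rw [List.prod_nil, map_one, Equiv.Perm.one_apply]
      simp [phi, SS, TT]
  | cons x l ih =>
      rw [List.prod_cons, map_mul, Equiv.Perm.mul_apply, List.length_cons]
      have h1 := pi_step x (h x (List.mem_cons_self)) (pi l.prod (0, 0))
      have h2 := ih fun y hy => h y (List.mem_cons_of_mem _ hy)
      omega

/-- The endpoint state of `gₙ`. -/
lemma pi_gn (n : ℕ) :
    pi ((lt 2) ^ n * la 2 * ((lt 2) ^ n)⁻¹ * (((lt 2) ^ n)⁻¹ * la 2 * (lt 2) ^ n)) (0, 0)
      = (Finsupp.single (n : ℤ) 1 + Finsupp.single (-(n : ℤ)) 1, 0) := by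
  have hT : ∀ s : St, (T ^ n) s = (s.1, s.2 + n) := fun s => by
    rw [← zpow_natCast]; exact Tpow n s
  have hTi : ∀ s : St, ((T ^ n)⁻¹) s = (s.1, s.2 - n) := fun s => by
    rw [← zpow_natCast, ← zpow_neg, Tpow]
    exact Prod.ext rfl (by ring)
  have s1 : (T ^ n) ((0, 0) : St) = (0, (n : ℤ)) := by
    rw [hT]; exact Prod.ext rfl (by ring)
  have s2 : A (0, (n : ℤ)) = (Finsupp.single (n : ℤ) 1, (n : ℤ)) := by
    rw [A_apply]; exact Prod.ext (zero_add _) rfl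
  have s3 : ((T ^ n)⁻¹) ((Finsupp.single (n : ℤ) 1, (n : ℤ)) : St)
      = (Finsupp.single (n : ℤ) 1, 0) := by
    rw [hTi]; exact Prod.ext rfl (by ring)
  have s4 : ((T ^ n)⁻¹) ((Finsupp.single (n : ℤ) 1, 0) : St)
      = (Finsupp.single (n : ℤ) 1, -(n : ℤ)) := by
    rw [hTi]; exact Prod.ext rfl (by ring)
  have s5 : A (Finsupp.single (n : ℤ) 1, -(n : ℤ))
      = (Finsupp.single (n : ℤ) 1 + Finsupp.single (-(n : ℤ)) 1, -(n : ℤ)) := rfl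
  have s6 : (T ^ n) ((Finsupp.single (n : ℤ) 1 + Finsupp.single (-(n : ℤ)) 1, -(n : ℤ)) : St)
      = (Finsupp.single (n : ℤ) 1 + Finsupp.single (-(n : ℤ)) 1, 0) := by
    rw [hT]; exact Prod.ext rfl (by ring)
  rw [map_mul, map_mul, map_mul, map_mul, map_mul, map_inv, map_pow, pi_lt, pi_la]
  simp only [Equiv.Perm.mul_apply]
  rw [s1, s2, s3, s4, s5, s6]

/-- The potential of the endpoint state of `gₙ`. -/
lemma phi_val (n : ℕ) (hn : 1 ≤ n) :
    4 * n + 2 ≤ phi (Finsupp.single (n : ℤ) 1 + Finsupp.single (-(n : ℤ)) 1, 0) := by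
  have hne : (-(n : ℤ)) ≠ (n : ℤ) := by omega
  have hone : (1 : ZMod 2) ≠ 0 := by decide
  have h1 : ((n : ℤ)) ∈ (Finsupp.single (n : ℤ) (1 : ZMod 2) + Finsupp.single (-(n : ℤ)) 1).support := by
    rw [Finsupp.mem_support_iff, Finsupp.add_apply, Finsupp.single_eq_same,
      Finsupp.single_eq_of_ne' hne, add_zero]
    exact hone
  have h2 : (-(n : ℤ)) ∈ (Finsupp.single (n : ℤ) (1 : ZMod 2) + Finsupp.single (-(n : ℤ)) 1).support := by
    rw [Finsupp.mem_support_iff, Finsupp.add_apply, Finsupp.single_eq_same,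
      Finsupp.single_eq_of_ne' (Ne.symm hne), zero_add]
    exact hone
  have hS := Finset.le_sup (f := fun i => (i + 1).toNat) h1
  have hT := Finset.le_sup (f := fun i => (-i).toNat) h2
  unfold phi SS TT
  dsimp only at hS hT ⊢
  omega

end LampAux

/-- In `L₂` with the automata generating set `{t, ta}`, the element
`gₙ = (tⁿ a t⁻ⁿ)(t⁻ⁿ a tⁿ)` has word length exactly `4n + 2` for `n ≥ 1`. -/
theorem lamplighter_automata_gn_wordLength (n : ℕ) (hn : 1 ≤ n) :
    wordLength {lt 2, lt 2 * la 2}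
      ((lt 2) ^ n * la 2 * ((lt 2) ^ n)⁻¹ * (((lt 2) ^ n)⁻¹ * la 2 * (lt 2) ^ n)) =
      4 * n + 2 := by
  obtain ⟨m, rfl⟩ : ∃ m, n = m + 1 := ⟨n - 1, by omega⟩
  set t := lt 2 with ht
  set a := la 2 with ha
  set g := t ^ (m + 1) * a * (t ^ (m + 1))⁻¹ * ((t ^ (m + 1))⁻¹ * a * t ^ (m + 1)) with hg
  set L : List (Lamp 2) :=
    List.replicate m t ++ [t * a] ++ List.replicate (m + 1) t⁻¹ ++
      List.replicate (m + 2) t⁻¹ ++ [t * a] ++ List.replicate (m + 1) t with hL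
  have hmem : ∀ x ∈ L, x ∈ ({t, t * a} : Set (Lamp 2)) ∨
      x⁻¹ ∈ ({t, t * a} : Set (Lamp 2)) := by
    intro x hx
    have : x = t ∨ x = t * a ∨ x = t⁻¹ := by
      simp only [hL, List.mem_append, List.mem_replicate, List.mem_singleton] at hx
      tauto
    rcases this with rfl | rfl | rfl
    · exact Or.inl (Set.mem_insert _ _)
    · exact Or.inl (Set.mem_insert_iff.2 (Or.inr rfl))
    · exact Or.inr (by rw [inv_inv]; exact Set.mem_insert _ _)
  have hlen : L.length = 4 * (m + 1) + 2 := by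
    simp only [hL, List.length_append, List.length_replicate, List.length_singleton]
    omega
  have hprod : L.prod = g := by
    simp only [hL, List.prod_append, List.prod_replicate, List.prod_singleton, hg]
    group
  have hmemset : (4 * (m + 1) + 2) ∈
      {k | ∃ l : List (Lamp 2), (∀ x ∈ l, x ∈ ({t, t * a} : Set (Lamp 2)) ∨
        x⁻¹ ∈ ({t, t * a} : Set (Lamp 2))) ∧ l.length = k ∧ l.prod = g} :=
    ⟨L, hmem, hlen, hprod⟩
  apply le_antisymm
  · exact Nat.sInf_le hmemset
  · refine le_csInf ⟨_, hmemset⟩ ?_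
    rintro b ⟨l, hl, rfl, hp⟩
    have h1 := LampAux.phi_prod l hl
    rw [hp, hg, ht, ha, LampAux.pi_gn] at h1
    have h2 := LampAux.phi_val (m + 1) (by omega)
    omega
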